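/- arXiv:1601.07158 — 2 statements merged into one kernel-verified Lean document; each statement's English description precedes it below -/
import Mathlib

section
/- For every subring R of ℚ, HTP(ℚ) is Turing reducible to HTP(R). -/
open scoped Classical

/-! ### Oracle computability and Turing reducibility -/

/-- Partial functions `ℕ →. ℕ` computable relative to an oracle `O : ℕ → ℕ`.
This mirrors Mathlib's `Nat.Partrec`, with the oracle added as a generator. -/
inductive OracleRecursiveIn (O : ℕ → ℕ) : (ℕ →. ℕ) → Prop
  | oracle : OracleRecursiveIn O O
  | zero : OracleRecursiveIn O (pure 0)
  | succ : OracleRecursiveIn O Nat.succ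
  | left : OracleRecursiveIn O ↑fun n : ℕ => n.unpair.1
  | right : OracleRecursiveIn O ↑fun n : ℕ => n.unpair.2
  | pair {f g} : OracleRecursiveIn O f → OracleRecursiveIn O g →
      OracleRecursiveIn O fun n => Nat.pair <$> f n <*> g n
  | comp {f g} : OracleRecursiveIn O f → OracleRecursiveIn O g →
      OracleRecursiveIn O fun n => g n >>= f
  | prec {f g} : OracleRecursiveIn O f → OracleRecursiveIn O g →
      OracleRecursiveIn O (Nat.unpaired fun a n =>
        n.rec (f a) fun y IH => do let i ← IH; g (Nat.pair a (Nat.pair y i)))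
  | rfind {f} : OracleRecursiveIn O f →
      OracleRecursiveIn O fun a => Nat.rfind fun n => (fun m => m = 0) <$> f (Nat.pair a n)

/-- The characteristic function of a set of natural numbers. -/
noncomputable def chi (A : Set ℕ) : ℕ → ℕ := fun n => if n ∈ A then 1 else 0

/-- `A ≤ₜ B` : the set `A` is Turing reducible to the set `B`. -/
def SetTuringReducible (A B : Set ℕ) : Prop :=
  OracleRecursiveIn (chi B) (chi A)

/-- `A ≡ₜ B` : the sets `A` and `B` are Turing equivalent. -/
def SetTuringEquivalent (A B : Set ℕ) : Prop :=
  SetTuringReducible A B ∧ SetTuringReducible B A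

/-- A set of natural numbers is computably enumerable if it is empty or the
range of a computable function. -/
def CE (A : Set ℕ) : Prop :=
  A = ∅ ∨ ∃ f : ℕ → ℕ, Computable f ∧ A = Set.range f

/-! ### Subrings of `ℚ` obtained by inverting sets of primes, and `HTP` -/

/-- `ℤ[S⁻¹]` : the subring of `ℚ` generated by `ℤ` together with the inverses
of the members of `S`. -/
def invSubring (S : Set ℕ) : Subring ℚ :=
  Subring.closure {x : ℚ | ∃ p ∈ S, x = (p : ℚ)⁻¹}

/-- A code for a polynomial in the variables `X₀, X₁, X₂, …` with coefficients
in `ℚ` : a list of monomials, each given by a coefficient together with the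
(finite) list of exponents of `X₀, …, X_k`. -/
abbrev QPolyCode := List (ℚ × List ℕ)

/-- A code for a polynomial in the variables `X₀, X₁, X₂, …` with integer
coefficients. -/
abbrev PolyCode := List (ℤ × List ℕ)

/-- Evaluate a list of exponents (for the variables `X_i, X_{i+1}, …`)
at an assignment `x` of rationals to the variables. -/
def evalExps (x : ℕ → ℚ) : List ℕ → ℕ → ℚ
  | [], _ => 1
  | e :: es, i => x i ^ e * evalExps x es (i + 1)

/-- Evaluate a polynomial code with rational coefficients at an assignment of
rationals to the variables. -/
def evalQCode (f : QPolyCode) (x : ℕ → ℚ) : ℚ :=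
  (f.map fun m => m.1 * evalExps x m.2 0).sum

/-- Evaluate a polynomial code with integer coefficients at an assignment of
rationals to the variables. -/
def evalCode (f : PolyCode) (x : ℕ → ℚ) : ℚ :=
  (f.map fun m => (m.1 : ℚ) * evalExps x m.2 0).sum

/-- Hilbert's Tenth Problem for a subring `R ⊆ ℚ`: the set of natural numbers
coding (via the fixed computable bijection `Denumerable.ofNat PolyCode`) a
polynomial with integer coefficients having a root with all coordinates in
`R`. -/
def HTP (R : Subring ℚ) : Set ℕ :=
  {n | ∃ x : ℕ → ℚ, (∀ i, x i ∈ R) ∧ evalCode (Denumerable.ofNat PolyCode n) x = 0}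

/-! ### Densities -/

open Filter in
/-- The lower density of a set `S` of primes within the set of all primes. -/
noncomputable def primeLowerDensity (S : Set ℕ) : ℝ :=
  liminf (fun X : ℕ =>
    (((Finset.range (X + 1)).filter fun p => p ∈ S ∧ p.Prime).card : ℝ) /
      (((Finset.range (X + 1)).filter Nat.Prime).card : ℝ)) atTop

open Filter in
/-- The upper density of a set `S` of primes within the set of all primes. -/
noncomputable def primeUpperDensity (S : Set ℕ) : ℝ :=
  limsup (fun X : ℕ =>
    (((Finset.range (X + 1)).filter fun p => p ∈ S ∧ p.Prime).card : ℝ) /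
      (((Finset.range (X + 1)).filter Nat.Prime).card : ℝ)) atTop

open Filter in
/-- The upper density of a set `S` relative to (the set enumerated by) the
injective enumeration `q`. -/
noncomputable def relUpperDensity (q : ℕ → ℕ) (S : Set ℕ) : ℝ :=
  limsup (fun n : ℕ =>
    (((Finset.range n).filter fun i => q i ∈ S).card : ℝ) / (n : ℝ)) atTop

open Filter in
/-- The lower density of a set `S` relative to (the set enumerated by) the
injective enumeration `q`. -/
noncomputable def relLowerDensity (q : ℕ → ℕ) (S : Set ℕ) : ℝ :=
  liminf (fun n : ℕ =>
    (((Finset.range n).filter fun i => q i ∈ S).card : ℝ) / (n : ℝ)) atTop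

section Stmt10Aux

/-! #### Code operations -/

/-- Pointwise sum of exponent lists, padded with zeros. -/
def addE (a b : List ℕ) : List ℕ :=
  (List.range (max a.length b.length)).map fun i => a.getD i 0 + b.getD i 0

/-- Product of two coefficient-free polynomials (lists of exponent lists). -/
def mulE (p q : List (List ℕ)) : List (List ℕ) :=
  p.flatMap fun a => q.map fun b => addE a b

/-- Power of a coefficient-free polynomial. -/
def powE (p : List (List ℕ)) : ℕ → List (List ℕ)
  | 0 => [[]]
  | n + 1 => mulE p (powE p n)

/-- The exponent lists of the polynomial `1 + X_k^2 + X_{k+1}^2 + X_{k+2}^2 + X_{k+3}^2`. -/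
def BExps (k : ℕ) : List (List ℕ) :=
  [] :: (List.range 4).map fun j => List.replicate (k + j) 0 ++ [2]

/-- Evaluation of a coefficient-free polynomial. -/
def evalE (p : List (List ℕ)) (x : ℕ → ℚ) : ℚ :=
  (p.map fun e => evalExps x e 0).sum

/-- The transformed polynomial, with explicit bounds `k` (number of variables) and
`D` (total degree): substitute `X_i ↦ X_i / B` and clear denominators by `B ^ D`. -/
def tfc (p : PolyCode) (k D : ℕ) : PolyCode :=
  p.flatMap fun m => (powE (BExps k) (D - m.2.sum)).map fun e => (m.1, addE m.2 e)

def KK (p : PolyCode) : ℕ := (p.map fun m => m.2.length).foldr max 0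
def DDeg (p : PolyCode) : ℕ := (p.map fun m => m.2.sum).foldr max 0

def transformP (p : PolyCode) : PolyCode := tfc p (KK p) (DDeg p)

/-! #### Semantics -/

theorem evalExps_eq_prod (x : ℕ → ℚ) (l : List ℕ) (i : ℕ) :
    evalExps x l i = ∏ j ∈ Finset.range l.length, x (i + j) ^ l.getD j 0 := by
  induction l generalizing i with
  | nil => simp [evalExps]
  | cons e es ih =>
    rw [show (e :: es).length = es.length + 1 from rfl, Finset.prod_range_succ']
    simp only [List.getD_cons_succ, List.getD_cons_zero, Nat.add_zero]
    rw [evalExps, ih (i + 1)]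
    rw [mul_comm]
    congr 1
    exact Finset.prod_congr rfl fun j _ => by rw [Nat.add_assoc, Nat.add_comm 1 j]

theorem prod_range_eval {x : ℕ → ℚ} {l : List ℕ} {i n : ℕ} (h : l.length ≤ n) :
    ∏ j ∈ Finset.range n, x (i + j) ^ l.getD j 0 = evalExps x l i := by
  rw [evalExps_eq_prod]
  symm
  apply Finset.prod_subset (Finset.range_subset_range.2 h)
  intro j _ hj
  rw [List.getD_eq_default _ _ (by simpa using hj), pow_zero]

theorem addE_getD (a b : List ℕ) (j : ℕ) :
    (addE a b).getD j 0 = a.getD j 0 + b.getD j 0 := by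
  by_cases hj : j < max a.length b.length
  · rw [addE, List.getD_eq_getElem _ _ (by simpa using hj)]
    simp
  · push_neg at hj
    rw [List.getD_eq_default _ _ (by simp [addE]; omega),
      List.getD_eq_default _ _ (by omega), List.getD_eq_default _ _ (by omega)]

theorem addE_length (a b : List ℕ) : (addE a b).length = max a.length b.length := by
  simp [addE]

theorem evalExps_addE (x : ℕ → ℚ) (a b : List ℕ) (i : ℕ) :
    evalExps x (addE a b) i = evalExps x a i * evalExps x b i := by
  rw [evalExps_eq_prod, addE_length]
  calc ∏ j ∈ Finset.range (max a.length b.length), x (i + j) ^ (addE a b).getD j 0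
      = ∏ j ∈ Finset.range (max a.length b.length),
          (x (i + j) ^ a.getD j 0 * x (i + j) ^ b.getD j 0) := by
        refine Finset.prod_congr rfl fun j _ => ?_
        rw [addE_getD, pow_add]
    _ = _ := by
        rw [Finset.prod_mul_distrib,
          prod_range_eval (le_max_left _ _), prod_range_eval (le_max_right _ _)]

theorem sum_map_mul_const {α : Type*} (c : ℚ) (L : List α) (f : α → ℚ) :
    (L.map fun e => c * f e).sum = c * (L.map f).sum := by
  induction L with
  | nil => simp
  | cons a t ih => simp [ih, mul_add]

theorem evalE_mulE (p q : List (List ℕ)) (x : ℕ → ℚ) :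
    evalE (mulE p q) x = evalE p x * evalE q x := by
  induction p with
  | nil => simp [evalE, mulE]
  | cons a t ih =>
    have hsplit : mulE (a :: t) q = (q.map fun b => addE a b) ++ mulE t q := by
      rw [mulE, List.flatMap_cons]; rfl
    rw [hsplit, evalE, List.map_append, List.sum_append]
    have h2 : (List.map (fun e => evalExps x e 0) (mulE t q)).sum
        = evalE t x * evalE q x := ih
    have h1 : (List.map (fun e => evalExps x e 0) (q.map fun b => addE a b)).sum
        = evalExps x a 0 * evalE q x := by
      rw [List.map_map]
      have hc : ((fun e => evalExps x e 0) ∘ fun b => addE a b)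
          = fun b => evalExps x a 0 * evalExps x b 0 := by
        funext b; exact evalExps_addE x a b 0
      rw [hc, sum_map_mul_const]; rfl
    have h3 : evalE (a :: t) x = evalExps x a 0 + evalE t x := by
      simp [evalE]
    rw [h1, h2, h3, add_mul]

theorem evalE_powE (p : List (List ℕ)) (x : ℕ → ℚ) :
    ∀ n, evalE (powE p n) x = evalE p x ^ n
  | 0 => by simp [powE, evalE, evalExps]
  | n + 1 => by rw [powE, evalE_mulE, evalE_powE p x n, pow_succ]; ring

theorem evalExps_rep (x : ℕ → ℚ) : ∀ (m i : ℕ),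
    evalExps x (List.replicate m 0 ++ [2]) i = x (i + m) ^ 2
  | 0, i => by simp [evalExps]
  | m + 1, i => by
    rw [List.replicate_succ, List.cons_append, evalExps, evalExps_rep x m (i + 1)]
    rw [show i + 1 + m = i + (m + 1) by omega]
    simp

theorem evalE_BExps (k : ℕ) (z : ℕ → ℚ) :
    evalE (BExps k) z
      = 1 + (z k ^ 2 + (z (k + 1) ^ 2 + (z (k + 2) ^ 2 + z (k + 3) ^ 2))) := by
  have h4 : List.range 4 = [0, 1, 2, 3] := by decide
  rw [BExps, h4]
  simp [evalE, evalExps, evalExps_rep]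

theorem evalExps_scale (x z : ℕ → ℚ) (b : ℚ) :
    ∀ (e : List ℕ) (i : ℕ), (∀ j, j < e.length → z (i + j) = b * x (i + j)) →
      evalExps z e i = b ^ e.sum * evalExps x e i
  | [], i, _ => by simp [evalExps]
  | h :: t, i, hz => by
    have h0 : z i = b * x i := by simpa using hz 0 (by simp)
    have ht : ∀ j, j < t.length → z (i + 1 + j) = b * x (i + 1 + j) := by
      intro j hj
      have := hz (j + 1) (by simp; omega)
      rwa [show i + (j + 1) = i + 1 + j by omega] at this
    rw [evalExps, evalExps, evalExps_scale x z b t (i + 1) ht, h0]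
    rw [List.sum_cons, mul_pow, pow_add]
    ring

theorem le_foldr_max {α : Type*} (f : α → ℕ) :
    ∀ (l : List α), ∀ a ∈ l, f a ≤ (l.map f).foldr max 0 := by
  intro l
  induction l with
  | nil => intro a ha; simp at ha
  | cons h t ih =>
    intro a ha
    rcases List.mem_cons.1 ha with rfl | ha
    · simp only [List.map_cons, List.foldr_cons]; exact le_max_left _ _
    · refine le_trans (ih a ha) ?_
      simp only [List.map_cons, List.foldr_cons]
      exact le_max_right _ _

theorem evalCode_tfc (k D : ℕ) (x z : ℕ → ℚ) (b : ℚ)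
    (hz : ∀ i, i < k → z i = b * x i) (hb : evalE (BExps k) z = b) :
    ∀ (p : PolyCode), (∀ m ∈ p, (m.2 : List ℕ).length ≤ k) → (∀ m ∈ p, m.2.sum ≤ D) →
      evalCode (tfc p k D) z = b ^ D * evalCode p x := by
  intro p
  induction p with
  | nil => intro _ _; simp [tfc, evalCode]
  | cons m t ih =>
    intro hk hD
    have hsplit : tfc (m :: t) k D
        = ((powE (BExps k) (D - m.2.sum)).map fun e => (m.1, addE m.2 e)) ++ tfc t k D := by
      rw [tfc, List.flatMap_cons]; rfl
    rw [hsplit, evalCode, List.map_append, List.sum_append, ← evalCode, ← evalCode,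
      ih (fun m' hm' => hk m' (List.mem_cons_of_mem _ hm'))
        (fun m' hm' => hD m' (List.mem_cons_of_mem _ hm'))]
    have hct : evalCode (m :: t) x = (m.1 : ℚ) * evalExps x m.2 0 + evalCode t x := by
      simp [evalCode]
    rw [hct, mul_add]
    congr 1
    rw [evalCode, List.map_map]
    have hcomp : ((fun m' : ℤ × List ℕ => (m'.1 : ℚ) * evalExps z m'.2 0)
          ∘ fun e => (m.1, addE m.2 e))
        = fun e => ((m.1 : ℚ) * evalExps z m.2 0) * evalExps z e 0 := by
      funext e
      simp only [Function.comp]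
      rw [evalExps_addE]
      ring
    rw [hcomp, sum_map_mul_const]
    have hzscale : evalExps z m.2 0 = b ^ m.2.sum * evalExps x m.2 0 := by
      apply evalExps_scale
      intro j hj
      exact hz _ (lt_of_lt_of_le (by simpa using hj) (hk m (List.mem_cons_self)))
    have hpow : (List.map (fun e => evalExps z e 0) (powE (BExps k) (D - m.2.sum))).sum
        = b ^ (D - m.2.sum) := by
      have := evalE_powE (BExps k) z (D - m.2.sum)
      rw [evalE] at this
      rw [this, hb]
    rw [hpow, hzscale]
    have hDm : m.2.sum ≤ D := hD m (List.mem_cons_self)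
    rw [show b ^ D = b ^ m.2.sum * b ^ (D - m.2.sum) by
      rw [← pow_add, Nat.add_sub_cancel' hDm]]
    ring

end Stmt10Aux

section Stmt10Aux2

theorem partrec_recursiveIn (O : ℕ → ℕ) {f : ℕ →. ℕ} (h : Nat.Partrec f) :
    OracleRecursiveIn O f := by
  induction h with
  | zero => exact .zero
  | succ => exact .succ
  | left => exact .left
  | right => exact .right
  | pair _ _ ihf ihg => exact .pair ihf ihg
  | comp _ _ ihf ihg => exact .comp ihf ihg
  | prec _ _ ihf ihg => exact .prec ihf ihg
  | rfind _ ihf => exact .rfind ihf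

theorem turingReducible_of_computable {A B : Set ℕ} (g : ℕ → ℕ) (hg : Computable g)
    (h : ∀ n, n ∈ A ↔ g n ∈ B) : SetTuringReducible A B := by
  have h1 : Nat.Partrec ↑g := Partrec.nat_iff.1 hg
  have h2 : OracleRecursiveIn (chi B) ↑g := partrec_recursiveIn _ h1
  have h3 : OracleRecursiveIn (chi B) fun n => (↑g : ℕ →. ℕ) n >>= (↑(chi B) : ℕ →. ℕ) :=
    OracleRecursiveIn.comp OracleRecursiveIn.oracle h2
  have h4 : (fun n => (↑g : ℕ →. ℕ) n >>= (↑(chi B) : ℕ →. ℕ)) = (↑(chi A) : ℕ →. ℕ) := by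
    funext n
    have hc : chi A n = chi B (g n) := by
      by_cases hn : n ∈ A
      · rw [chi, if_pos hn, chi, if_pos ((h n).1 hn)]
      · rw [chi, if_neg hn, chi, if_neg fun hb => hn ((h n).2 hb)]
    simp [PFun.coe_val, hc]
    exact Part.bind_some _ _
  rw [SetTuringReducible, ← h4]
  exact h3

/-! #### Primitive recursiveness of the transformation -/

theorem primrec_addE : Primrec₂ addE :=
  Primrec.list_map
    (Primrec.list_range.comp (Primrec.nat_max.comp
      (Primrec.list_length.comp .fst) (Primrec.list_length.comp .snd)))
    ((Primrec.nat_add.comp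
      ((Primrec.list_getD 0).comp (Primrec.fst.comp Primrec.fst) Primrec.snd)
      ((Primrec.list_getD 0).comp (Primrec.snd.comp Primrec.fst) Primrec.snd)).to₂)

theorem primrec_mulE : Primrec₂ mulE :=
  Primrec.list_flatMap Primrec.fst
    (Primrec.list_map (Primrec.snd.comp Primrec.fst)
      ((primrec_addE.comp (Primrec.snd.comp Primrec.fst) Primrec.snd).to₂))

theorem primrec_powE : Primrec₂ powE := by
  have h := Primrec.nat_rec' (Primrec.snd (α := List (List ℕ)) (β := ℕ))
    (Primrec.const [([] : List ℕ)])
    ((primrec_mulE.comp (Primrec.fst.comp Primrec.fst) (Primrec.snd.comp Primrec.snd)).to₂)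
  exact h.of_eq fun a => by
    obtain ⟨p, n⟩ := a
    induction n with
    | zero => rfl
    | succ n ih => exact congrArg (mulE p) ih

theorem primrec_BExps : Primrec BExps := by
  have h : Primrec fun k : ℕ =>
      ([] : List ℕ) :: (List.range 4).map fun j => ((List.range (k + j)).map fun _ => 0) ++ [2] :=
    Primrec.list_cons.comp (Primrec.const []) <|
      Primrec.list_map (Primrec.const (List.range 4)) <|
        (Primrec.list_append.comp
          (Primrec.list_map
            (Primrec.list_range.comp (Primrec.nat_add.comp Primrec.fst Primrec.snd))
            ((Primrec.const 0).to₂))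
          (Primrec.const [2])).to₂
  exact h.of_eq fun k => by simp [BExps, List.map_const']

theorem primrec_natListSum : Primrec fun l : List ℕ => l.sum := by
  have h := Primrec.list_foldr (Primrec.id (α := List ℕ)) (Primrec.const 0)
    ((Primrec.nat_add.comp (Primrec.fst.comp Primrec.snd) (Primrec.snd.comp Primrec.snd)).to₂)
  exact h.of_eq fun l => (List.sum_eq_foldr (l := l)).symm

theorem primrec_foldrMax : Primrec fun l : List ℕ => l.foldr max 0 :=
  (Primrec.list_foldr (Primrec.id (α := List ℕ)) (Primrec.const 0)
    ((Primrec.nat_max.comp (Primrec.fst.comp Primrec.snd)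
      (Primrec.snd.comp Primrec.snd)).to₂)).of_eq fun l => rfl

theorem primrec_KK : Primrec KK :=
  primrec_foldrMax.comp <|
    Primrec.list_map Primrec.id ((Primrec.list_length.comp
      (Primrec.snd.comp Primrec.snd)).to₂)

theorem primrec_DDeg : Primrec DDeg :=
  primrec_foldrMax.comp <|
    Primrec.list_map Primrec.id ((primrec_natListSum.comp
      (Primrec.snd.comp Primrec.snd)).to₂)

theorem primrec_transformP : Primrec transformP := by
  have hg : Primrec₂ fun (p : PolyCode) (m : ℤ × List ℕ) =>
      (powE (BExps (KK p)) (DDeg p - m.2.sum)).map fun e => (m.1, addE m.2 e) := by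
    apply Primrec.list_map
    · exact primrec_powE.comp (primrec_BExps.comp (primrec_KK.comp Primrec.fst))
        (Primrec.nat_sub.comp (primrec_DDeg.comp Primrec.fst)
          (primrec_natListSum.comp (Primrec.snd.comp Primrec.snd)))
    · exact (Primrec.pair (Primrec.fst.comp (Primrec.snd.comp Primrec.fst))
        (primrec_addE.comp (Primrec.snd.comp (Primrec.snd.comp Primrec.fst))
          Primrec.snd)).to₂
  exact (Primrec.list_flatMap Primrec.id hg).of_eq fun p => rfl

theorem computable_gmap : Computable fun n : ℕ =>
    Encodable.encode (transformP (Denumerable.ofNat PolyCode n)) :=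
  (Primrec.encode.comp (primrec_transformP.comp (Primrec.ofNat PolyCode))).to_comp

theorem rat_den_mul (q : ℚ) : ((q.den : ℚ)) * q = (q.num : ℚ) := by
  rw [mul_comm, eq_comm, ← div_eq_iff (by exact_mod_cast q.den_ne_zero)]
  exact Rat.num_div_den q

end Stmt10Aux2

/-- For every subring `R` of `ℚ`, `HTP(ℚ) ≤ₜ HTP(R)`. -/
theorem stmt10 (R : Subring ℚ) : SetTuringReducible (HTP ⊤) (HTP R) := by
  apply turingReducible_of_computable _ computable_gmap
  intro n
  set p := Denumerable.ofNat PolyCode n with hp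
  have hdec : Denumerable.ofNat PolyCode (Encodable.encode (transformP p)) = transformP p :=
    Denumerable.ofNat_encode _
  have hkb : ∀ m ∈ p, (m.2 : List ℕ).length ≤ KK p := fun m hm =>
    le_foldr_max (fun m : ℤ × List ℕ => m.2.length) p m hm
  have hDb : ∀ m ∈ p, (m.2 : List ℕ).sum ≤ DDeg p := fun m hm =>
    le_foldr_max (fun m : ℤ × List ℕ => m.2.sum) p m hm
  constructor
  · rintro ⟨x, -, hx⟩
    set k := KK p with hk
    set D := DDeg p with hD
    set d : ℕ := ∏ i ∈ Finset.range k, (x i).den with hd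
    have hdpos : 0 < d := Finset.prod_pos fun i _ => (x i).pos
    obtain ⟨a, b, c, e, habce⟩ := Nat.sum_four_squares (d - 1)
    set z : ℕ → ℚ := fun i =>
      if i < k then (d : ℚ) * x i
      else if i = k then (a : ℚ)
      else if i = k + 1 then (b : ℚ)
      else if i = k + 2 then (c : ℚ)
      else if i = k + 3 then (e : ℚ) else 0 with hzdef
    have hzval : ∀ i, i < k → z i = (d : ℚ) * x i := by
      intro i hi; simp only [hzdef, if_pos hi]
    have hb : evalE (BExps k) z = (d : ℚ) := by
      rw [evalE_BExps]
      have e0 : z k = (a : ℚ) := by simp [hzdef]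
      have e1 : z (k + 1) = (b : ℚ) := by
        simp only [hzdef]
        rw [if_neg (by omega), if_neg (by omega)]; simp
      have e2 : z (k + 2) = (c : ℚ) := by
        simp only [hzdef]
        rw [if_neg (by omega), if_neg (by omega), if_neg (by omega)]; simp
      have e3 : z (k + 3) = (e : ℚ) := by
        simp only [hzdef]
        rw [if_neg (by omega), if_neg (by omega), if_neg (by omega), if_neg (by omega)]
        simp
      rw [e0, e1, e2, e3]
      have : ((a : ℚ) ^ 2 + ((b : ℚ) ^ 2 + ((c : ℚ) ^ 2 + (e : ℚ) ^ 2))) = ((d - 1 : ℕ) : ℚ) := by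
        push_cast [← habce]; ring
      rw [this]
      have : ((d - 1 : ℕ) : ℚ) = (d : ℚ) - 1 := by
        push_cast [Nat.cast_sub hdpos]; ring
      rw [this]; ring
    refine ⟨z, ?_, ?_⟩
    · intro i
      by_cases h1 : i < k
      · have hdvd : (x i).den ∣ d := Finset.dvd_prod_of_mem _ (Finset.mem_range.2 h1)
        obtain ⟨t, ht⟩ := hdvd
        have hcast : (d : ℚ) * x i = (((t : ℤ) * (x i).num : ℤ) : ℚ) := by
          rw [ht]
          push_cast
          rw [mul_comm ((x i).den : ℚ) (t : ℚ), mul_assoc, rat_den_mul]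
        rw [hzval i h1, hcast]
        exact intCast_mem R _
      · simp only [hzdef, if_neg h1]
        split
        · exact natCast_mem R a
        · split
          · exact natCast_mem R b
          · split
            · exact natCast_mem R c
            · split
              · exact natCast_mem R e
              · exact zero_mem R
    · rw [hdec]
      have heval := evalCode_tfc k D x z (d : ℚ)
        (fun i hi => hzval i hi) hb p hkb hDb
      rw [transformP, ← hk, ← hD, heval, hx, mul_zero]
  · rintro ⟨z, hzR, hz0⟩
    set k := KK p with hk
    set D := DDeg p with hD
    set bq : ℚ := evalE (BExps k) z with hbq
    have hbpos : 0 < bq := by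
      rw [hbq, evalE_BExps]; positivity
    refine ⟨fun i => z i / bq, fun i => Subring.mem_top _, ?_⟩
    have hzz : ∀ i, i < k → z i = bq * (z i / bq) := by
      intro i _
      field_simp
    have heval := evalCode_tfc k D (fun i => z i / bq) z bq hzz hbq.symm p hkb hDb
    rw [hdec, transformP, ← hk, ← hD, heval] at hz0
    rcases mul_eq_zero.1 hz0 with h | h
    · exact absurd h (pow_ne_zero _ (ne_of_gt hbpos))
    · exact h
end

section
/- Let R be any subring of ℚ, let m be a positive integer, and let A ⊆ ℚ^m be a set that is diophantine over ℚ. Then A ∩ R^m is diophantine over R. -/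
open scoped Classical

/-! ### Oracle computability and Turing reducibility -/

/-- Partial functions `ℕ →. ℕ` computable relative to an oracle `O : ℕ → ℕ`.
This mirrors Mathlib's `Nat.Partrec`, with the oracle added as a generator. -/
inductive RecursiveInOracle (O : ℕ → ℕ) : (ℕ →. ℕ) → Prop
  | oracle : RecursiveInOracle O O
  | zero : RecursiveInOracle O (pure 0)
  | succ : RecursiveInOracle O Nat.succ
  | left : RecursiveInOracle O ↑fun n : ℕ => n.unpair.1
  | right : RecursiveInOracle O ↑fun n : ℕ => n.unpair.2
  | pair {f g} : RecursiveInOracle O f → RecursiveInOracle O g →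
      RecursiveInOracle O fun n => Nat.pair <$> f n <*> g n
  | comp {f g} : RecursiveInOracle O f → RecursiveInOracle O g →
      RecursiveInOracle O fun n => g n >>= f
  | prec {f g} : RecursiveInOracle O f → RecursiveInOracle O g →
      RecursiveInOracle O (Nat.unpaired fun a n =>
        n.rec (f a) fun y IH => do let i ← IH; g (Nat.pair a (Nat.pair y i)))
  | rfind {f} : RecursiveInOracle O f →
      RecursiveInOracle O fun a => Nat.rfind fun n => (fun m => m = 0) <$> f (Nat.pair a n)

/-- `A ≤ₜ B` : the set `A` is Turing reducible to the set `B`. -/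
def TuringReducibleSet (A B : Set ℕ) : Prop :=
  RecursiveInOracle (chi B) (chi A)

/-- `A ≡ₜ B` : the sets `A` and `B` are Turing equivalent. -/
def TuringEquivalentSet (A B : Set ℕ) : Prop :=
  TuringReducibleSet A B ∧ TuringReducibleSet B A

/-- A subset `A ⊆ R^k` is diophantine over the commutative ring `R` if there
are `n` and a polynomial `f` in `k + n` variables with coefficients in `R`
such that `A = {t | ∃ x ∈ R^n, f(t, x) = 0}`. -/
def DiophOver (R : Type*) [CommRing R] {k : ℕ} (A : Set (Fin k → R)) : Prop :=
  ∃ (n : ℕ) (f : MvPolynomial (Fin k ⊕ Fin n) R),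
    A = {t | ∃ x : Fin n → R, MvPolynomial.eval (Sum.elim t x) f = 0}

open MvPolynomial
set_option maxRecDepth 4000

/-- Auxiliary: the "cleared denominators" polynomial and its evaluation. -/
noncomputable def clearPoly {m n : ℕ} (f : MvPolynomial (Fin m ⊕ Fin n) ℚ) :
    MvPolynomial (Fin m ⊕ (Fin n ⊕ Fin 4)) ℚ :=
  ∑ μ ∈ f.support, MvPolynomial.C (MvPolynomial.coeff μ f)
    * (∏ v ∈ μ.support, (Sum.elim (fun i => (MvPolynomial.X (Sum.inl i) : MvPolynomial (Fin m ⊕ (Fin n ⊕ Fin 4)) ℚ))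
        (fun j => MvPolynomial.X (Sum.inr (Sum.inl j))) v) ^ μ v)
    * (1 + ∑ i : Fin 4, (MvPolynomial.X (Sum.inr (Sum.inr i)) : MvPolynomial (Fin m ⊕ (Fin n ⊕ Fin 4)) ℚ) ^ 2)
        ^ (f.totalDegree - ∑ v ∈ μ.support, Sum.elim (fun _ => 0) (fun _ => μ v) v)

lemma eval_clearPoly {m n : ℕ} (f : MvPolynomial (Fin m ⊕ Fin n) ℚ)
    (t : Fin m → ℚ) (a : Fin n → ℚ) (c : Fin 4 → ℚ) :
    MvPolynomial.eval (Sum.elim t (Sum.elim a c)) (clearPoly f)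
      = (1 + ∑ i : Fin 4, c i ^ 2) ^ f.totalDegree
        * MvPolynomial.eval (Sum.elim t fun j => a j / (1 + ∑ i : Fin 4, c i ^ 2)) f := by
  classical
  set Dv : ℚ := 1 + ∑ i : Fin 4, c i ^ 2 with hDvdef
  have hDv : 0 < Dv := by positivity
  set N := f.totalDegree with hN
  rw [clearPoly, map_sum, MvPolynomial.eval_eq, Finset.mul_sum]
  refine Finset.sum_congr rfl fun μ hμ => ?_
  have hs : (∑ v ∈ μ.support, Sum.elim (fun _ => 0) (fun _ => μ v) v) ≤ N := by
    refine le_trans (Finset.sum_le_sum fun v _ => ?_) (MvPolynomial.le_totalDegree hμ)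
    rcases v with i | j <;> simp
  set s := ∑ v ∈ μ.support, Sum.elim (fun _ => 0) (fun _ => μ v) v with hsdef
  have hevalD : MvPolynomial.eval (Sum.elim t (Sum.elim a c))
      (1 + ∑ i : Fin 4, (MvPolynomial.X (Sum.inr (Sum.inr i)) : MvPolynomial (Fin m ⊕ (Fin n ⊕ Fin 4)) ℚ) ^ 2) = Dv := by
    simp [hDvdef]
  rw [map_mul, map_mul, map_pow, hevalD, MvPolynomial.eval_C, map_prod]
  have h1 : ∀ v ∈ μ.support, MvPolynomial.eval (Sum.elim t (Sum.elim a c))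
      ((Sum.elim (fun i => (MvPolynomial.X (Sum.inl i) : MvPolynomial (Fin m ⊕ (Fin n ⊕ Fin 4)) ℚ))
        (fun j => MvPolynomial.X (Sum.inr (Sum.inl j))) v) ^ μ v)
      = (Sum.elim t a v) ^ μ v := by
    rintro (i | j) _ <;> simp
  rw [Finset.prod_congr rfl h1]
  have h2 : ∀ v ∈ μ.support,
      (Sum.elim t (fun j => a j / Dv) v) ^ μ v
        = (Sum.elim t a v) ^ μ v * Dv⁻¹ ^ (Sum.elim (fun _ => 0) (fun _ => μ v) v) := by
    rintro (i | j) _ <;> simp [div_eq_mul_inv, mul_pow]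
  rw [Finset.prod_congr rfl h2, Finset.prod_mul_distrib, Finset.prod_pow_eq_pow_sum, ← hsdef,
    pow_sub₀ Dv hDv.ne' hs]
  ring

lemma eval_subring (R : Subring ℚ) {σ : Type*} (p : MvPolynomial σ R) (v : σ → R) :
    ((MvPolynomial.eval v p : R) : ℚ)
      = MvPolynomial.eval (fun i => (v i : ℚ)) (MvPolynomial.map (SubringClass.subtype R) p) := by
  rw [MvPolynomial.eval_map]
  have := MvPolynomial.eval₂_comp_left (SubringClass.subtype R) (RingHom.id R) v p
  simp at this
  rw [this]; rfl

theorem stmt11' (R : Subring ℚ) (m : ℕ) (hm : 0 < m) (A : Set (Fin m → ℚ))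
    (hA : ∃ (n : ℕ) (f : MvPolynomial (Fin m ⊕ Fin n) ℚ),
      A = {t | ∃ x : Fin n → ℚ, MvPolynomial.eval (Sum.elim t x) f = 0}) :
    ∃ (n : ℕ) (F : MvPolynomial (Fin m ⊕ Fin n) R),
      {t : Fin m → R | (fun i => (t i : ℚ)) ∈ A}
        = {t | ∃ x : Fin n → R, MvPolynomial.eval (Sum.elim t x) F = 0} := by
  classical
  obtain ⟨n, f, hf⟩ := hA
  set h := clearPoly f with hh
  set d : ℕ := ∏ μ ∈ h.support, (MvPolynomial.coeff μ h).den with hd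
  have hd0 : 0 < d := Finset.prod_pos fun μ _ => (MvPolynomial.coeff μ h).pos
  have hmem : ∀ μ, ((d : ℚ) * MvPolynomial.coeff μ h) ∈ R := by
    intro μ
    by_cases hμ : μ ∈ h.support
    · obtain ⟨k, hk⟩ := Finset.dvd_prod_of_mem (fun μ => (MvPolynomial.coeff μ h).den) hμ
      have : (d : ℚ) * MvPolynomial.coeff μ h
          = (((MvPolynomial.coeff μ h).num * k : ℤ) : ℚ) := by
        have hnum : (MvPolynomial.coeff μ h) * ((MvPolynomial.coeff μ h).den : ℚ)
            = ((MvPolynomial.coeff μ h).num : ℚ) := Rat.mul_den_eq_num _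
        rw [hd, hk]
        push_cast [← hnum]
        ring
      rw [this]; exact intCast_mem R _
    · rw [MvPolynomial.notMem_support_iff.mp hμ, mul_zero]; exact zero_mem R
  set hR : MvPolynomial (Fin m ⊕ (Fin n ⊕ Fin 4)) R :=
    ∑ μ ∈ h.support, MvPolynomial.monomial μ (⟨(d : ℚ) * MvPolynomial.coeff μ h, hmem μ⟩ : R)
    with hhR
  have hmap : MvPolynomial.map (SubringClass.subtype R) hR
      = MvPolynomial.C (d : ℚ) * h := by
    ext μ'
    rw [MvPolynomial.coeff_map, MvPolynomial.coeff_C_mul, hhR, MvPolynomial.coeff_sum]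
    simp only [MvPolynomial.coeff_monomial]
    rw [Finset.sum_ite_eq' h.support μ']
    by_cases hμ' : μ' ∈ h.support
    · simp [hμ']
    · simp [hμ', MvPolynomial.notMem_support_iff.mp hμ']
  have key : ∀ (t : Fin m → R) (a : Fin n → R) (c : Fin 4 → R),
      (MvPolynomial.eval (Sum.elim t (Sum.elim a c)) hR = 0
        ↔ MvPolynomial.eval (Sum.elim (fun i => (t i : ℚ))
            (fun j => (a j : ℚ) / (1 + ∑ i : Fin 4, (c i : ℚ) ^ 2))) f = 0) := by
    intro t a c
    have hDv : (0:ℚ) < 1 + ∑ i : Fin 4, (c i : ℚ) ^ 2 := by positivity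
    have hcoe : (fun i => ((Sum.elim t (Sum.elim a c) i : R) : ℚ))
        = Sum.elim (fun i => (t i : ℚ)) (Sum.elim (fun j => (a j : ℚ)) (fun i => (c i : ℚ))) := by
      funext v; rcases v with i | (j | i) <;> rfl
    have h1 : ((MvPolynomial.eval (Sum.elim t (Sum.elim a c)) hR : R) : ℚ)
        = (d : ℚ) * ((1 + ∑ i : Fin 4, (c i : ℚ) ^ 2) ^ f.totalDegree
            * MvPolynomial.eval (Sum.elim (fun i => (t i : ℚ))
              (fun j => (a j : ℚ) / (1 + ∑ i : Fin 4, (c i : ℚ) ^ 2))) f) := by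
      rw [eval_subring, hmap, map_mul, MvPolynomial.eval_C, hcoe, hh, eval_clearPoly]
    constructor
    · intro h0
      have : ((MvPolynomial.eval (Sum.elim t (Sum.elim a c)) hR : R) : ℚ) = 0 := by
        rw [h0]; rfl
      rw [h1] at this
      rcases mul_eq_zero.mp this with h2 | h2
      · exact absurd h2 (by positivity)
      rcases mul_eq_zero.mp h2 with h3 | h3
      · exact absurd h3 (by positivity)
      · exact h3
    · intro h0
      have : ((MvPolynomial.eval (Sum.elim t (Sum.elim a c)) hR : R) : ℚ) = 0 := by
        rw [h1, h0, mul_zero, mul_zero]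
      exact_mod_cast this
  refine ⟨n + 4, MvPolynomial.rename (Sum.map id finSumFinEquiv) hR, ?_⟩
  ext t
  simp only [Set.mem_setOf_eq, hf]
  constructor
  · rintro ⟨x, hx⟩
    set d0 : ℕ := ∏ j, (x j).den with hd0def
    have hd00 : 0 < d0 := Finset.prod_pos fun j _ => (x j).pos
    obtain ⟨w1, w2, w3, w4, hw⟩ := Nat.sum_four_squares (d0 - 1)
    set c : Fin 4 → R := ![(w1 : R), (w2 : R), (w3 : R), (w4 : R)] with hc
    have hDv : (1 + ∑ i : Fin 4, (c i : ℚ) ^ 2) = (d0 : ℚ) := by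
      have h5 : (d0 - 1) + 1 = d0 := Nat.succ_pred_eq_of_pos hd00
      rw [hc, Fin.sum_univ_four]
      simp only [Matrix.cons_val_zero, Matrix.cons_val_one, Matrix.head_cons,
        Matrix.cons_val_two, Matrix.tail_cons, Matrix.cons_val_three]
      have h6 : 1 + (w1 ^ 2 + w2 ^ 2 + w3 ^ 2 + w4 ^ 2) = d0 := by omega
      push_cast
      exact_mod_cast h6
    have ha : ∀ j, x j * d0 ∈ R := by
      intro j
      obtain ⟨k, hk⟩ := Finset.dvd_prod_of_mem (fun j => (x j).den) (Finset.mem_univ j)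
      have : x j * d0 = (((x j).num * k : ℤ) : ℚ) := by
        rw [hd0def, hk]; push_cast; rw [← mul_assoc, Rat.mul_den_eq_num]
      rw [this]; exact intCast_mem R _
    set a : Fin n → R := fun j => ⟨x j * d0, ha j⟩ with haa
    refine ⟨(Sum.elim a c) ∘ finSumFinEquiv.symm, ?_⟩
    rw [MvPolynomial.eval_rename]
    have hcomp : (Sum.elim t ((Sum.elim a c) ∘ finSumFinEquiv.symm)) ∘ (Sum.map id finSumFinEquiv)
        = Sum.elim t (Sum.elim a c) := by
      funext v; rcases v with v | v <;> simp
    rw [hcomp, key]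
    have : (fun j => (a j : ℚ) / (1 + ∑ i : Fin 4, (c i : ℚ) ^ 2)) = x := by
      funext j
      rw [hDv, haa]
      have : ((d0:ℚ)) ≠ 0 := by positivity
      field_simp
    rw [this]
    exact hx
  · rintro ⟨y, hy⟩
    rw [MvPolynomial.eval_rename] at hy
    have hcomp : (Sum.elim t y) ∘ (Sum.map id finSumFinEquiv)
        = Sum.elim t (Sum.elim (fun j => y (finSumFinEquiv (Sum.inl j)))
            (fun i => y (finSumFinEquiv (Sum.inr i)))) := by
      funext v; rcases v with v | (v | v) <;> simp
    rw [hcomp, key] at hy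
    exact ⟨_, hy⟩

/-- Let `R` be any subring of `ℚ`, `m` a positive integer,
and `A ⊆ ℚ^m` diophantine over `ℚ`. Then `A ∩ R^m` is diophantine over `R`. -/
theorem stmt11 (R : Subring ℚ) (m : ℕ) (hm : 0 < m) (A : Set (Fin m → ℚ))
    (hA : DiophOver ℚ A) :
    DiophOver R {t : Fin m → R | (fun i => (t i : ℚ)) ∈ A} :=
  stmt11' R m hm A hA
end
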